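/- The vector of weights w minimizing σ_e² (w − 1_n)ᵀ Σ_q^{-1} (w − 1_n) + σ_u² (wᵀX₂ − tᵀ) D_q (wᵀX₂ − t)ᵀ subject to the exact constraint wᵀX₁ = sᵀ equals w = 1_n + Σ_q X [XᵀΣ_q X + γ diag(0_p, D_q^{-1})]^{-1}(v − Xᵀ1_n), where X = (X₁, X₂), v = (s; t), γ = σ_e²/σ_u², provided XᵀΣ_q X + γ diag(0_p, D_q^{-1}) and X₁ᵀV⁻¹X₁ (with V = σ_e²Σ_q^{-1} + σ_u² X₂ D_q X₂ᵀ) are invertible. -/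

import Mathlib

open Matrix

private lemma symm_dot {m : Type*} [Fintype m] (M : Matrix m m ℝ) (hM : Mᵀ = M)
    (x y : m → ℝ) : x ⬝ᵥ M *ᵥ y = y ⬝ᵥ M *ᵥ x := by
  rw [dotProduct_mulVec, ← mulVec_transpose, hM, dotProduct_comm]

private lemma dot_trans {k m : Type*} [Fintype k] [Fintype m] (M : Matrix m k ℝ)
    (x : m → ℝ) (y : k → ℝ) : x ⬝ᵥ M *ᵥ y = (Mᵀ *ᵥ x) ⬝ᵥ y := by
  rw [dotProduct_mulVec, mulVec_transpose]

open Matrix in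
theorem stmt_6 {n p q : ℕ}
    (X₁ : Matrix (Fin n) (Fin p) ℝ) (X₂ : Matrix (Fin n) (Fin q) ℝ)
    (s : Fin p → ℝ) (t : Fin q → ℝ)
    (Sq : Matrix (Fin n) (Fin n) ℝ) (hSd : Sq.IsDiag) (hS : Sq.PosDef)
    (Dq : Matrix (Fin q) (Fin q) ℝ) (hD : Dq.PosDef)
    (σe2 σu2 : ℝ) (hσe : 0 < σe2) (hσu : 0 < σu2)
    (γ : ℝ) (hγ : γ = σe2 / σu2)
    (X : Matrix (Fin n) (Fin p ⊕ Fin q) ℝ) (hX : X = Matrix.fromCols X₁ X₂)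
    (v : Fin p ⊕ Fin q → ℝ) (hv : v = Sum.elim s t)
    (A : Matrix (Fin p ⊕ Fin q) (Fin p ⊕ Fin q) ℝ)
    (hA : A = Xᵀ * Sq * X + γ • Matrix.fromBlocks 0 0 0 Dq⁻¹)
    (hAinv : IsUnit A.det)
    (V : Matrix (Fin n) (Fin n) ℝ)
    (hV : V = σe2 • Sq⁻¹ + σu2 • (X₂ * Dq * X₂ᵀ))
    (hVX : IsUnit (X₁ᵀ * V⁻¹ * X₁).det)
    (J : (Fin n → ℝ) → ℝ)
    (hJ : J = fun w => σe2 * ((w - 1) ⬝ᵥ (Sq⁻¹ *ᵥ (w - 1))) +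
      σu2 * ((X₂ᵀ *ᵥ w - t) ⬝ᵥ (Dq *ᵥ (X₂ᵀ *ᵥ w - t))))
    (wstar : Fin n → ℝ)
    (hw : wstar = 1 + (Sq * X * A⁻¹) *ᵥ (v - Xᵀ *ᵥ 1)) :
    X₁ᵀ *ᵥ wstar = s ∧ ∀ w : Fin n → ℝ, X₁ᵀ *ᵥ w = s → J wstar ≤ J w := by
  have hSq : IsUnit Sq.det := isUnit_iff_ne_zero.mpr hS.det_pos.ne'
  have hDq : IsUnit Dq.det := isUnit_iff_ne_zero.mpr hD.det_pos.ne'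
  have hγ2 : σu2 * γ = σe2 := by rw [hγ]; field_simp
  set B : Matrix (Fin p ⊕ Fin q) (Fin p ⊕ Fin q) ℝ := fromBlocks 0 0 0 Dq⁻¹ with hB
  set d : Fin p ⊕ Fin q → ℝ := A⁻¹ *ᵥ (v - Xᵀ *ᵥ 1) with hdd
  set d₁ : Fin p → ℝ := d ∘ Sum.inl with hd1
  set d₂ : Fin q → ℝ := d ∘ Sum.inr with hd2
  have hAd : A *ᵥ d = v - Xᵀ *ᵥ 1 := by
    rw [hdd, mulVec_mulVec, Matrix.mul_nonsing_inv _ hAinv, one_mulVec]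
  have hwst : wstar = 1 + Sq *ᵥ (X *ᵥ d) := by
    rw [hw, hdd, ← mulVec_mulVec, ← mulVec_mulVec]
  -- key identity for Xᵀ *ᵥ wstar
  have hXw : Xᵀ *ᵥ wstar = v - γ • (B *ᵥ d) := by
    have h1 : (Xᵀ * Sq * X) *ᵥ d = (v - Xᵀ *ᵥ 1) - γ • (B *ᵥ d) := by
      have := hAd
      rw [hA, add_mulVec, smul_mulVec] at this
      have := sub_eq_of_eq_add' this.symm
      linear_combination (norm := module) -this
    rw [hwst, mulVec_add, mulVec_mulVec, mulVec_mulVec, h1]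
    module
  have hBl : ∀ i, (B *ᵥ d) (Sum.inl i) = 0 := by
    intro i
    simp [hB, mulVec, dotProduct, Fintype.sum_sum_type, fromBlocks]
  have hBr : ∀ i, (B *ᵥ d) (Sum.inr i) = (Dq⁻¹ *ᵥ d₂) i := by
    intro i
    simp [hB, mulVec, dotProduct, Fintype.sum_sum_type, fromBlocks, hd2, Function.comp]
  -- feasibility
  have hfeas : X₁ᵀ *ᵥ wstar = s := by
    funext i
    have h1 : (Xᵀ *ᵥ wstar) (Sum.inl i) = (X₁ᵀ *ᵥ wstar) i := by
      rw [hX, transpose_fromCols, fromRows_mulVec]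
      rfl
    have h2 := congrFun hXw (Sum.inl i)
    rw [h1] at h2
    simpa [hv, hBl i] using h2
  refine ⟨hfeas, fun w hwfeas => ?_⟩
  -- derived identities at wstar
  have hX2w : X₂ᵀ *ᵥ wstar - t = (-γ) • (Dq⁻¹ *ᵥ d₂) := by
    funext i
    have h1 : (Xᵀ *ᵥ wstar) (Sum.inr i) = (X₂ᵀ *ᵥ wstar) i := by
      rw [hX, transpose_fromCols, fromRows_mulVec]
      rfl
    have h2 := congrFun hXw (Sum.inr i)
    rw [h1] at h2
    simp only [hv] at h2
    simp [h2, hBr i]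
  have hDw : Dq *ᵥ (X₂ᵀ *ᵥ wstar - t) = (-γ) • d₂ := by
    rw [hX2w, mulVec_smul, mulVec_mulVec, Matrix.mul_nonsing_inv _ hDq, one_mulVec]
  have hSw : Sq⁻¹ *ᵥ (wstar - 1) = X *ᵥ d := by
    have : wstar - 1 = Sq *ᵥ (X *ᵥ d) := by rw [hwst]; abel
    rw [this, mulVec_mulVec, Matrix.nonsing_inv_mul _ hSq, one_mulVec]
  have hXd : X *ᵥ d = X₁ *ᵥ d₁ + X₂ *ᵥ d₂ := by
    have : d = Sum.elim d₁ d₂ := by funext j; cases j <;> rfl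
    rw [hX, this, fromCols_mulVec_sumElim]
  -- symmetry facts
  have hSsym : (Sq⁻¹)ᵀ = Sq⁻¹ := by
    rw [Matrix.transpose_nonsing_inv]
    congr 1
    simpa using hS.isHermitian.eq
  have hDsym : Dqᵀ = Dq := by simpa using hD.isHermitian.eq
  -- set up perturbation
  set h : Fin n → ℝ := w - wstar with hh
  have hX1h : X₁ᵀ *ᵥ h = 0 := by
    rw [hh, mulVec_sub, hwfeas, hfeas, sub_self]
  set g : Fin q → ℝ := X₂ᵀ *ᵥ h with hg
  have e1 : w - 1 = (wstar - 1) + h := by rw [hh]; abel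
  have e2 : X₂ᵀ *ᵥ w - t = (X₂ᵀ *ᵥ wstar - t) + g := by
    rw [hg, hh, mulVec_sub]; abel
  set a : Fin n → ℝ := wstar - 1 with ha
  set b : Fin q → ℝ := X₂ᵀ *ᵥ wstar - t with hb2
  -- cross term vanishes
  have hcross : σe2 * (h ⬝ᵥ Sq⁻¹ *ᵥ a) + σu2 * (g ⬝ᵥ Dq *ᵥ b) = 0 := by
    have c1 : h ⬝ᵥ Sq⁻¹ *ᵥ a = h ⬝ᵥ X₁ *ᵥ d₁ + h ⬝ᵥ X₂ *ᵥ d₂ := by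
      rw [ha, hSw, hXd, dotProduct_add]
    have c2 : g ⬝ᵥ Dq *ᵥ b = (-γ) * (h ⬝ᵥ X₂ *ᵥ d₂) := by
      rw [hb2, hDw, dotProduct_smul, smul_eq_mul, hg, ← dot_trans]
    have c3 : h ⬝ᵥ X₁ *ᵥ d₁ = 0 := by rw [dot_trans, hX1h, zero_dotProduct]
    rw [c1, c2, c3]
    linear_combination (-(h ⬝ᵥ X₂ *ᵥ d₂)) * hγ2
  -- nonnegativity of quadratic terms
  have hq1 : 0 ≤ h ⬝ᵥ Sq⁻¹ *ᵥ h := by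
    have := hS.inv.posSemidef.dotProduct_mulVec_nonneg h
    simpa using this
  have hq2 : 0 ≤ g ⬝ᵥ Dq *ᵥ g := by
    have := hD.posSemidef.dotProduct_mulVec_nonneg g
    simpa using this
  -- expand
  rw [hJ]
  simp only
  rw [e1, e2]
  rw [show (wstar - 1 : Fin n → ℝ) = a from rfl, show X₂ᵀ *ᵥ wstar - t = b from rfl]
  have exp1 : (a + h) ⬝ᵥ Sq⁻¹ *ᵥ (a + h)
      = a ⬝ᵥ Sq⁻¹ *ᵥ a + 2 * (h ⬝ᵥ Sq⁻¹ *ᵥ a) + h ⬝ᵥ Sq⁻¹ *ᵥ h := by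
    rw [mulVec_add, dotProduct_add, add_dotProduct, add_dotProduct,
      symm_dot Sq⁻¹ hSsym a h]
    ring
  have exp2 : (b + g) ⬝ᵥ Dq *ᵥ (b + g)
      = b ⬝ᵥ Dq *ᵥ b + 2 * (g ⬝ᵥ Dq *ᵥ b) + g ⬝ᵥ Dq *ᵥ g := by
    rw [mulVec_add, dotProduct_add, add_dotProduct, add_dotProduct,
      symm_dot Dq hDsym b g]
    ring
  rw [exp1, exp2]
  nlinarith [mul_nonneg hσe.le hq1, mul_nonneg hσu.le hq2]
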